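/- arXiv:1310.5103 — 3 statements merged into one kernel-verified Lean document; each statement's English description precedes it below -/
import Mathlib

section
/- Two quasi-concave hit curves h₁, h₂ with parameters (α₁, β₁) and (α₂, β₂) and the same prevalence π have equal AUC if and only if (β₁ − π)α₁ = (β₂ − π)α₂. -/
lemma lin_int (s d a b : ℝ) :
    (∫ t in a..b, (s * t + d)) = s * ((b^2 - a^2)/2) + d * (b - a) := by
  rw [intervalIntegral.integral_add ((by continuity : Continuous fun t : ℝ => s * t).intervalIntegrable a b)
      (intervalIntegrable_const), intervalIntegral.integral_const_mul,
      integral_id, intervalIntegral.integral_const]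
  simp [smul_eq_mul]
  ring

lemma hit_int (π α β : ℝ) (hπ0 : 0 < π) (hπ1 : π < 1)
    (hβ : π ≤ β ∧ β ≤ 1) (hα : 0 < α ∧ α ≤ π / β) (h : ℝ → ℝ)
    (hdef : ∀ t : ℝ, h t = if t ≤ α then β * t
      else ((π - α * β) / (1 - α)) * (t - α) + α * β) :
    (∫ t in (0:ℝ)..1, h t) = (π + α * (β - π)) / 2 := by
  have hβ0 : 0 < β := lt_of_lt_of_le hπ0 hβ.1
  have hα1 : α ≤ 1 := le_trans hα.2 (by
    rw [div_le_one hβ0]; exact hβ.1)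
  set s := (π - α * β) / (1 - α) with hs
  have hcont : Continuous h := by
    have : h = fun t => if t ≤ α then β * t else s * (t - α) + α * β := by
      funext t; rw [hdef t]
    rw [this]
    apply Continuous.if_le (by continuity) (by continuity) continuous_id
      continuous_const
    intro x hx; simp only [id_eq] at hx; rw [hx]; ring
  have hint : ∀ a b : ℝ, IntervalIntegrable h MeasureTheory.volume a b :=
    fun a b => hcont.intervalIntegrable a b
  have hsplit : (∫ t in (0:ℝ)..1, h t)
      = (∫ t in (0:ℝ)..α, h t) + ∫ t in α..(1:ℝ), h t :=
    (intervalIntegral.integral_add_adjacent_intervals (hint 0 α) (hint α 1)).symm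
  have h1 : (∫ t in (0:ℝ)..α, h t) = ∫ t in (0:ℝ)..α, (β * t + 0) := by
    apply intervalIntegral.integral_congr
    intro t ht
    rw [Set.uIcc_of_le (le_of_lt hα.1)] at ht
    rw [hdef t, if_pos ht.2]; ring
  have h2 : (∫ t in α..(1:ℝ), h t) = ∫ t in α..(1:ℝ), (s * t + (α * β - s * α)) := by
    apply intervalIntegral.integral_congr
    intro t ht
    rw [Set.uIcc_of_le hα1] at ht
    rw [hdef t]
    by_cases hc : t ≤ α
    · have : t = α := le_antisymm hc ht.1
      subst this
      rw [if_pos le_rfl]; ring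
    · rw [if_neg hc]; ring
  rw [hsplit, h1, h2, lin_int, lin_int]
  rcases eq_or_lt_of_le hα1 with heq | hlt
  · -- α = 1, then β = π
    have hβπ : β = π := by
      have h1 : π / β ≥ 1 := heq ▸ hα.2
      have h2 : π / β ≤ 1 := by rw [div_le_one hβ0]; exact hβ.1
      have : π / β = 1 := le_antisymm h2 h1
      field_simp at this; linarith
    subst heq; subst hβπ
    ring
  · have hsv : s * (1 - α) = π - α * β := by
      rw [hs, div_mul_eq_mul_div, mul_div_assoc,
        div_self (ne_of_gt (by linarith : (0:ℝ) < 1 - α)), mul_one]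
    nlinarith [hsv]

/-- Two quasi-concave hit curves with parameters `(α₁, β₁)`, `(α₂, β₂)` and the
same prevalence `π` have equal AUC iff `(β₁ − π)α₁ = (β₂ − π)α₂`. -/
theorem stmt8 (π α₁ β₁ α₂ β₂ : ℝ) (hπ : π ∈ Set.Ioo (0:ℝ) 1)
    (hβ₁ : π ≤ β₁ ∧ β₁ ≤ 1) (hα₁ : 0 < α₁ ∧ α₁ ≤ π / β₁)
    (hβ₂ : π ≤ β₂ ∧ β₂ ≤ 1) (hα₂ : 0 < α₂ ∧ α₂ ≤ π / β₂)
    (h₁ h₂ : ℝ → ℝ)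
    (hdef₁ : ∀ t : ℝ, h₁ t = if t ≤ α₁ then β₁ * t
      else ((π - α₁ * β₁) / (1 - α₁)) * (t - α₁) + α₁ * β₁)
    (hdef₂ : ∀ t : ℝ, h₂ t = if t ≤ α₂ then β₂ * t
      else ((π - α₂ * β₂) / (1 - α₂)) * (t - α₂) + α₂ * β₂) :
    (1 / (π * (1 - π))) * ((∫ t in (0:ℝ)..1, h₁ t) - π ^ 2 / 2)
      = (1 / (π * (1 - π))) * ((∫ t in (0:ℝ)..1, h₂ t) - π ^ 2 / 2)
    ↔ (β₁ - π) * α₁ = (β₂ - π) * α₂ := by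
  obtain ⟨hπ0, hπ1⟩ := hπ
  rw [hit_int π α₁ β₁ hπ0 hπ1 hβ₁ hα₁ h₁ hdef₁,
      hit_int π α₂ β₂ hπ0 hπ1 hβ₂ hα₂ h₂ hdef₂]
  have hc : (0:ℝ) < 1 / (π * (1 - π)) :=
    one_div_pos.mpr (mul_pos hπ0 (by linarith))
  rw [mul_right_inj' (ne_of_gt hc)]
  constructor <;> intro h <;> nlinarith [h]
end

section
/- For a quasi-concave hit curve h with parameters (α, β), α ∈ (0, π/β], β ∈ [π,1], the exact average precision AP(h) = (1/π)·∫₀¹ (h(t)/t)·h'(t) dt equals (1/π)·[β²α + (π − αβ)²/(1 − α) − ((π − αβ)/(1 − α))·((β − π)α/(1 − α))·log α]. -/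
open MeasureTheory Set

/-- Exact average precision of the quasi-concave hit curve:
`AP = (1/π)·[β²α + (π − αβ)²/(1 − α) − ((π − αβ)/(1 − α))·((β − π)α/(1 − α))·log α]`. -/
theorem stmt10 (π α β : ℝ) (hπ : π ∈ Set.Ioo (0:ℝ) 1)
    (hβ : π ≤ β ∧ β ≤ 1) (hα : 0 < α ∧ α ≤ π / β) (hα1 : α < 1)
    (h h' : ℝ → ℝ)
    (hdef : ∀ t : ℝ, h t = if t ≤ α then β * t
      else ((π - α * β) / (1 - α)) * (t - α) + α * β)
    (hd : ∀ t : ℝ, h' t = if t < α then β else (π - α * β) / (1 - α)) :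
    (1 / π) * ∫ t in (0:ℝ)..1, (h t / t) * h' t
      = (1 / π) * (β ^ 2 * α + (π - α * β) ^ 2 / (1 - α)
          - ((π - α * β) / (1 - α)) * ((β - π) * α / (1 - α)) * Real.log α) := by
  obtain ⟨hα0, hαβ⟩ := hα
  have h1α : (0:ℝ) < 1 - α := by linarith
  set c : ℝ := (π - α * β) / (1 - α) with hc
  set f : ℝ → ℝ := fun t => (h t / t) * h' t with hf
  have hne : ∀ᵐ x : ℝ, x ≠ α := by
    have : volume ({α} : Set ℝ) = 0 := Real.volume_singleton
    rw [MeasureTheory.ae_iff]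
    simpa using this
  -- piece 1
  have heq1 : ∀ x ∈ Set.Ioc (0:ℝ) α, x ≠ α → f x = β ^ 2 := by
    intro x hx hxne
    have hx0 : x ≠ 0 := ne_of_gt hx.1
    have hlt : x < α := lt_of_le_of_ne hx.2 hxne
    simp only [hf, hdef, hd, if_pos hx.2, if_pos hlt]
    field_simp
  have i1 : IntervalIntegrable f volume 0 α := by
    rw [intervalIntegrable_iff_integrableOn_Ioc_of_le hα0.le]
    have hconst : IntegrableOn (fun _ : ℝ => β ^ 2) (Set.Ioc 0 α) := by
      exact integrableOn_const (by simp) (by simp)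
    refine hconst.congr ?_
    filter_upwards [ae_restrict_mem measurableSet_Ioc,
      MeasureTheory.ae_restrict_of_ae hne] with x hx hxne
    exact (heq1 x hx hxne).symm
  have int1 : ∫ t in (0:ℝ)..α, f t = β ^ 2 * α := by
    have : ∫ t in (0:ℝ)..α, f t = ∫ _t in (0:ℝ)..α, (β ^ 2 : ℝ) := by
      apply intervalIntegral.integral_congr_ae
      filter_upwards [hne] with x hxne hx
      rw [Set.uIoc_of_le hα0.le] at hx
      exact heq1 x hx hxne
    rw [this, intervalIntegral.integral_const]
    simp [mul_comm]
  -- piece 2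
  set g : ℝ → ℝ := fun t => c ^ 2 + c * α * (β - c) * t⁻¹ with hg
  have heq2 : ∀ x ∈ Set.Icc α 1, f x = g x := by
    intro x hx
    have hx0 : (0:ℝ) < x := lt_of_lt_of_le hα0 hx.1
    rcases eq_or_lt_of_le hx.1 with hxa | hxa
    · simp only [hf, hg, hdef, hd, ← hxa, le_refl, if_pos, lt_irrefl, if_neg, if_false,
        not_false_iff]
      field_simp
      ring
    · have hnle : ¬ x ≤ α := not_le.2 hxa
      simp only [hf, hg, hdef, hd, if_neg hnle, if_neg (not_lt.2 hxa.le)]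
      field_simp
      ring
  have hcont : ContinuousOn g (Set.Icc α 1) := by
    apply continuousOn_const.add
    apply continuousOn_const.mul
    exact ContinuousOn.inv₀ continuousOn_id fun x hx => ne_of_gt (lt_of_lt_of_le hα0 hx.1)
  have i2 : IntervalIntegrable f volume α 1 := by
    rw [intervalIntegrable_iff_integrableOn_Icc_of_le hα1.le]
    exact (hcont.integrableOn_Icc).congr_fun (fun x hx => (heq2 x hx).symm) measurableSet_Icc
  have iinv : IntervalIntegrable (fun t : ℝ => c * α * (β - c) * t⁻¹) volume α 1 := by
    apply IntervalIntegrable.const_mul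
    exact intervalIntegral.intervalIntegrable_inv (fun x hx => by
      rw [Set.uIcc_of_le hα1.le] at hx
      exact ne_of_gt (lt_of_lt_of_le hα0 hx.1)) continuousOn_id
  have int2 : ∫ t in α..1, f t
      = c ^ 2 * (1 - α) - c * α * (β - c) * Real.log α := by
    have e1 : ∫ t in α..1, f t = ∫ t in α..1, g t := by
      apply intervalIntegral.integral_congr
      intro x hx
      rw [Set.uIcc_of_le hα1.le] at hx
      exact heq2 x hx
    rw [e1, hg]
    rw [intervalIntegral.integral_add (intervalIntegrable_const) iinv]
    rw [intervalIntegral.integral_const_mul, integral_inv (by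
      rw [Set.uIcc_of_le hα1.le]; intro hx; exact absurd hx.1 (by linarith))]
    rw [intervalIntegral.integral_const]
    rw [Real.log_div one_ne_zero (ne_of_gt hα0), Real.log_one]
    simp only [smul_eq_mul]
    ring
  have split : ∫ t in (0:ℝ)..1, f t = (∫ t in (0:ℝ)..α, f t) + ∫ t in α..1, f t :=
    (intervalIntegral.integral_add_adjacent_intervals i1 i2).symm
  have : ∫ t in (0:ℝ)..1, (h t / t) * h' t
      = β ^ 2 * α + (c ^ 2 * (1 - α) - c * α * (β - c) * Real.log α) := by
    rw [show (fun t => (h t / t) * h' t) = f from rfl] at *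
    rw [split, int1, int2]
  rw [this]
  congr 1
  have hne1 : (1 - α) ≠ 0 := ne_of_gt h1α
  rw [hc]
  field_simp
  ring
end

section
/- Define the rescaled metrics ÃP = (AP − π)/(1 − π) and ÃUC = 2·AUC − 1. For a quasi-concave hit curve with parameters (α, β), using the approximation AP ≈ (β/π)·(β−π)α + π and the exact AUC = ((β−π)α)/(2π(1−π)) + 1/2, one has ÃP = β · ÃUC. -/
/-- With `AP = (β/π)(β−π)α + π` and `AUC = ((β−π)α)/(2π(1−π)) + 1/2`, the
rescaled metrics satisfy `ÃP = β · ÃUC`. -/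
theorem stmt12 (π α β AP AUC : ℝ) (hπ : π ∈ Set.Ioo (0:ℝ) 1)
    (hβ : π ≤ β ∧ β ≤ 1) (hα : 0 < α ∧ α ≤ π / β)
    (hAP : AP = (β / π) * ((β - π) * α) + π)
    (hAUC : AUC = ((β - π) * α) / (2 * π * (1 - π)) + 1 / 2) :
    (AP - π) / (1 - π) = β * (2 * AUC - 1) := by
  obtain ⟨h0, h1⟩ := hπ
  subst hAP hAUC
  have h2 : (1 - π) ≠ 0 := by linarith
  have h3 : π ≠ 0 := ne_of_gt h0
  field_simp
  ring
end
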